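/- Under the assumptions of the previous lemma (IAD), together with spatial homogeneity (E[a_{j,t+δ} a_{j',t'+δ'}] = Ω(j, j', t'+δ'−t−δ) when both t+δ and t'+δ' lie in T, and E[Dz_{i,t} Dz_{i',t'}] = Γ(i, i', t'−t)) and spatially uncorrelated derivatives (Γ(i, i', d) = 0 for d ≠ 0), the weight-gradient covariance factorizes: E[Dw_{i,j,δ} Dw_{i',j',δ'}] = β(δ, δ') · Ω(j, j', δ'−δ) · Γ(i, i', 0), where β(δ, δ') = |{t ∈ T : t+δ ∈ T, t+δ' ∈ T}|. -/

import Mathlib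

open MeasureTheory ProbabilityTheory

/-- **Theorem 1 of the KFC paper.**  Under independence of activations and
derivatives (IAD), spatial homogeneity (SH) of the second moments, vanishing of the
activations outside the grid `T`, and spatially uncorrelated derivatives (SUD),
the weight-gradient second moments factorize as
`E[Dw i j δ * Dw i' j' δ'] = β(δ,δ') · Ω(j,j',δ'−δ) · Γ(i,i',0)`, where
`β(δ,δ') = |{t ∈ T : t+δ ∈ T ∧ t+δ' ∈ T}|`. -/
theorem kfc_factorization {α : Type*} [MeasurableSpace α] (μ : Measure α)
    [IsProbabilityMeasure μ]
    {J I : Type*} (T : Finset (ℤ × ℤ))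
    (a : J → ℤ × ℤ → α → ℝ) (Dz : I → ℤ × ℤ → α → ℝ)
    (Ωf : J → J → ℤ × ℤ → ℝ) (Γf : I → I → ℤ × ℤ → ℝ)
    (ha_meas : ∀ j t, Measurable (a j t)) (hDz_meas : ∀ i t, Measurable (Dz i t))
    (ha_L2 : ∀ j t, MemLp (a j t) 2 μ) (hDz_L2 : ∀ i t, MemLp (Dz i t) 2 μ)
    -- IAD: the activations are independent of the pre-activation derivatives
    (hIAD : Indep
      (⨆ p : J × (ℤ × ℤ), MeasurableSpace.comap (a p.1 p.2) inferInstance)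
      (⨆ p : I × (ℤ × ℤ), MeasurableSpace.comap (Dz p.1 p.2) inferInstance) μ)
    -- activations vanish outside the grid
    (ha_zero : ∀ j t, t ∉ T → a j t = 0)
    -- SH for activations and derivatives
    (hSH_a : ∀ j j' s s', s ∈ T → s' ∈ T →
      (∫ ω, a j s ω * a j' s' ω ∂μ) = Ωf j j' (s' - s))
    (hSH_Dz : ∀ i i' t t', t ∈ T → t' ∈ T →
      (∫ ω, Dz i t ω * Dz i' t' ω ∂μ) = Γf i i' (t' - t))
    -- SUD: derivatives at distinct locations are uncorrelated
    (hSUD : ∀ i i' d, d ≠ (0 : ℤ × ℤ) → Γf i i' d = 0)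
    (i i' : I) (j j' : J) (δ δ' : ℤ × ℤ) :
    ∫ ω, (∑ t ∈ T, a j (t + δ) ω * Dz i t ω) *
         (∑ t' ∈ T, a j' (t' + δ') ω * Dz i' t' ω) ∂μ
      = ((T.filter (fun t => t + δ ∈ T ∧ t + δ' ∈ T)).card : ℝ) *
          Ωf j j' (δ' - δ) * Γf i i' 0 := by
  classical
  set mA := ⨆ p : J × (ℤ × ℤ), MeasurableSpace.comap (a p.1 p.2) inferInstance with hmA
  set mD := ⨆ p : I × (ℤ × ℤ), MeasurableSpace.comap (Dz p.1 p.2) inferInstance with hmD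
  -- product of two L2 is integrable
  have hmulL1 : ∀ (f g : α → ℝ), MemLp f 2 μ → MemLp g 2 μ →
      Integrable (fun ω => f ω * g ω) μ := by
    intro f g hf hg
    have := hg.smul (𝕜 := ℝ) hf (r := 1)
    rw [memLp_one_iff_integrable] at this
    exact this
  -- independence of products
  have hIndep : ∀ (s s' t t' : ℤ × ℤ), IndepFun
      (fun ω => a j s ω * a j' s' ω) (fun ω => Dz i t ω * Dz i' t' ω) μ := by
    intro s s' t t'
    have h1 : MeasurableSpace.comap (fun ω => a j s ω * a j' s' ω) inferInstance ≤ mA := by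
      rw [← measurable_iff_comap_le]
      exact Measurable.mul
        (measurable_iff_comap_le.mpr (le_iSup (fun p : J × (ℤ×ℤ) =>
          MeasurableSpace.comap (a p.1 p.2) inferInstance) (j, s)))
        (measurable_iff_comap_le.mpr (le_iSup (fun p : J × (ℤ×ℤ) =>
          MeasurableSpace.comap (a p.1 p.2) inferInstance) (j', s')))
    have h2 : MeasurableSpace.comap (fun ω => Dz i t ω * Dz i' t' ω) inferInstance ≤ mD := by
      rw [← measurable_iff_comap_le]
      exact Measurable.mul
        (measurable_iff_comap_le.mpr (le_iSup (fun p : I × (ℤ×ℤ) =>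
          MeasurableSpace.comap (Dz p.1 p.2) inferInstance) (i, t)))
        (measurable_iff_comap_le.mpr (le_iSup (fun p : I × (ℤ×ℤ) =>
          MeasurableSpace.comap (Dz p.1 p.2) inferInstance) (i', t')))
    exact indep_of_indep_of_le_right (indep_of_indep_of_le_left hIAD h1) h2
  -- integrability of each summand
  have hInt : ∀ (s t : ℤ × ℤ) (s' t' : ℤ × ℤ), Integrable
      (fun ω => (a j s ω * Dz i t ω) * (a j' s' ω * Dz i' t' ω)) μ := by
    intro s t s' t'
    have : (fun ω => (a j s ω * Dz i t ω) * (a j' s' ω * Dz i' t' ω)) =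
        fun ω => (a j s ω * a j' s' ω) * (Dz i t ω * Dz i' t' ω) := by
      funext ω; ring
    rw [this]
    exact (hIndep s s' t t').integrable_mul
      (hmulL1 _ _ (ha_L2 j s) (ha_L2 j' s'))
      (hmulL1 _ _ (hDz_L2 i t) (hDz_L2 i' t'))
  -- value of each summand integral
  have hval : ∀ s t s' t' : ℤ × ℤ,
      ∫ ω, (a j s ω * Dz i t ω) * (a j' s' ω * Dz i' t' ω) ∂μ
        = (∫ ω, a j s ω * a j' s' ω ∂μ) * (∫ ω, Dz i t ω * Dz i' t' ω ∂μ) := by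
    intro s t s' t'
    have : (fun ω => (a j s ω * Dz i t ω) * (a j' s' ω * Dz i' t' ω)) =
        fun ω => (a j s ω * a j' s' ω) * (Dz i t ω * Dz i' t' ω) := by
      funext ω; ring
    rw [this]
    exact (hIndep s s' t t').integral_fun_mul_eq_mul_integral
      ((ha_meas j s).mul (ha_meas j' s')).aestronglyMeasurable
      ((hDz_meas i t).mul (hDz_meas i' t')).aestronglyMeasurable
  -- expand the integrand
  have hexp : ∀ ω, (∑ t ∈ T, a j (t + δ) ω * Dz i t ω) *
      (∑ t' ∈ T, a j' (t' + δ') ω * Dz i' t' ω)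
      = ∑ t ∈ T, ∑ t' ∈ T,
          (a j (t + δ) ω * Dz i t ω) * (a j' (t' + δ') ω * Dz i' t' ω) := by
    intro ω; rw [Finset.sum_mul_sum]
  calc ∫ ω, (∑ t ∈ T, a j (t + δ) ω * Dz i t ω) *
         (∑ t' ∈ T, a j' (t' + δ') ω * Dz i' t' ω) ∂μ
      = ∑ t ∈ T, ∑ t' ∈ T, ∫ ω,
          (a j (t + δ) ω * Dz i t ω) * (a j' (t' + δ') ω * Dz i' t' ω) ∂μ := by
        simp_rw [hexp]
        rw [integral_finset_sum T (fun t _ => integrable_finset_sum T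
          (fun t' _ => hInt (t + δ) t (t' + δ') t'))]
        exact Finset.sum_congr rfl fun t _ =>
          integral_finset_sum T (fun t' _ => hInt (t + δ) t (t' + δ') t')
    _ = ∑ t ∈ T, (∫ ω, a j (t + δ) ω * a j' (t + δ') ω ∂μ) * Γf i i' 0 := by
        refine Finset.sum_congr rfl fun t ht => ?_
        rw [Finset.sum_eq_single t]
        · rw [hval, hSH_Dz i i' t t ht ht, sub_self]
        · intro t' ht' hne
          rw [hval, hSH_Dz i i' t t' ht ht', hSUD i i' _ (fun h => hne (sub_eq_zero.mp h)), mul_zero]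
        · intro h; exact absurd ht h
    _ = ∑ t ∈ T, (if t + δ ∈ T ∧ t + δ' ∈ T then Ωf j j' (δ' - δ) * Γf i i' 0 else 0) := by
        refine Finset.sum_congr rfl fun t ht => ?_
        by_cases h : t + δ ∈ T ∧ t + δ' ∈ T
        · rw [if_pos h, hSH_a j j' _ _ h.1 h.2]
          congr 2
          abel
        · rw [if_neg h]
          rcases not_and_or.mp h with h | h
          · rw [ha_zero j _ h]
            simp
          · rw [ha_zero j' _ h]
            simp
    _ = ((T.filter (fun t => t + δ ∈ T ∧ t + δ' ∈ T)).card : ℝ) *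
          Ωf j j' (δ' - δ) * Γf i i' 0 := by
        rw [Finset.sum_ite, Finset.sum_const, Finset.sum_const_zero, add_zero,
          nsmul_eq_mul, mul_assoc]
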